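/- arXiv:1912.10742 — 3 statements merged into one kernel-verified Lean document; each statement's English description precedes it below -/
import Mathlib

section
/- Let (X, d_f) and (X, d_{f̂}) denote the same set X equipped with two filter-based pseudometrics induced by continuous functions f, f̂ : X → Z into a metric space Z, via d_f(x,x') = inf over continuous paths γ from x to x' of diam_Z(f∘γ). If sup_{x∈X} d_Z(f(x), f̂(x)) ≤ ε, then for all x,x' ∈ X, |d_f(x,x') − d_{f̂}(x,x')| ≤ 2ε, and consequently the Gromov–Hausdorff distance between (X,d_f) and (X,d_{f̂}) is at most 2ε. -/
open Set Metric ENNReal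

/-- The filter-based pseudometric. -/
noncomputable def dFilter {X Z : Type*} [TopologicalSpace X] [PseudoMetricSpace Z]
    (f : X → Z) (x x' : X) : ℝ≥0∞ :=
  ⨅ γ : Path x x', EMetric.diam (f '' Set.range γ)

/-- A correspondence between two sets. -/
def IsCorrespondence {A B : Type*} (C : Set (A × B)) : Prop :=
  (∀ a, ∃ b, (a, b) ∈ C) ∧ (∀ b, ∃ a, (a, b) ∈ C)

/-- The distortion of a correspondence between two pseudometrics. -/
noncomputable def corrDistortion {A B : Type*} (dA : A → A → ℝ≥0∞) (dB : B → B → ℝ≥0∞)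
    (C : Set (A × B)) : ℝ≥0∞ :=
  ⨆ p ∈ C, ⨆ q ∈ C, max (dA p.1 q.1 - dB p.2 q.2) (dB p.2 q.2 - dA p.1 q.1)

/-- Gromov–Hausdorff distance via correspondences. -/
noncomputable def ghDist {A B : Type*} (dA : A → A → ℝ≥0∞) (dB : B → B → ℝ≥0∞) : ℝ≥0∞ :=
  (⨅ C : {C : Set (A × B) // IsCorrespondence C}, corrDistortion dA dB C.1) / 2

lemma dFilter_le_aux {X Z : Type*} [TopologicalSpace X] [MetricSpace Z]
    (f fhat : X → Z) (ε : ℝ) (hε : 0 ≤ ε)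
    (hclose : ∀ x : X, dist (f x) (fhat x) ≤ ε) (x x' : X) :
    dFilter f x x' ≤ dFilter fhat x x' + ENNReal.ofReal (2 * ε) := by
  have key : ∀ γ : Path x x',
      EMetric.diam (f '' Set.range γ) ≤
        EMetric.diam (fhat '' Set.range γ) + ENNReal.ofReal (2 * ε) := by
    intro γ
    apply EMetric.diam_le
    rintro _ ⟨a, ha, rfl⟩ _ ⟨b, hb, rfl⟩
    have h1 : edist (f a) (fhat a) ≤ ENNReal.ofReal ε := by
      rw [edist_dist]; exact ENNReal.ofReal_le_ofReal (hclose a)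
    have h2 : edist (fhat b) (f b) ≤ ENNReal.ofReal ε := by
      rw [edist_comm, edist_dist]; exact ENNReal.ofReal_le_ofReal (hclose b)
    have h3 : edist (fhat a) (fhat b) ≤ EMetric.diam (fhat '' Set.range γ) :=
      EMetric.edist_le_diam_of_mem (Set.mem_image_of_mem _ ha)
        (Set.mem_image_of_mem _ hb)
    calc edist (f a) (f b)
        ≤ edist (f a) (fhat a) + edist (fhat a) (fhat b) + edist (fhat b) (f b) :=
          edist_triangle4 _ _ _ _
      _ ≤ ENNReal.ofReal ε + EMetric.diam (fhat '' Set.range γ) + ENNReal.ofReal ε := by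
          gcongr
      _ = EMetric.diam (fhat '' Set.range γ) + ENNReal.ofReal (2 * ε) := by
          rw [two_mul, ENNReal.ofReal_add hε hε]; ring
  calc dFilter f x x'
      ≤ ⨅ γ : Path x x', (EMetric.diam (fhat '' Set.range γ) + ENNReal.ofReal (2 * ε)) :=
        le_iInf fun γ => (iInf_le _ γ).trans (key γ)
    _ = dFilter fhat x x' + ENNReal.ofReal (2 * ε) := by
        rw [dFilter, ENNReal.iInf_add]

/-- If `sup_x d_Z(f x, f̂ x) ≤ ε` then the filter-based pseudometrics of `f` and `f̂`
differ by at most `2ε`, and hence the Gromov–Hausdorff distance between `(X, d_f)` and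
`(X, d_f̂)` is at most `2ε`. -/
theorem dFilter_perturbation {X Z : Type*} [TopologicalSpace X] [MetricSpace Z]
    (f fhat : X → Z) (hf : Continuous f) (hfhat : Continuous fhat)
    (ε : ℝ) (hε : 0 ≤ ε) (hclose : ∀ x : X, dist (f x) (fhat x) ≤ ε) :
    (∀ x x' : X,
      dFilter f x x' ≤ dFilter fhat x x' + ENNReal.ofReal (2 * ε) ∧
      dFilter fhat x x' ≤ dFilter f x x' + ENNReal.ofReal (2 * ε)) ∧
    ghDist (dFilter f) (dFilter fhat) ≤ ENNReal.ofReal (2 * ε) := by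
  have hclose' : ∀ x : X, dist (fhat x) (f x) ≤ ε := fun x => by
    rw [dist_comm]; exact hclose x
  have hmain : ∀ x x' : X,
      dFilter f x x' ≤ dFilter fhat x x' + ENNReal.ofReal (2 * ε) ∧
      dFilter fhat x x' ≤ dFilter f x x' + ENNReal.ofReal (2 * ε) := fun x x' =>
    ⟨dFilter_le_aux f fhat ε hε hclose x x', dFilter_le_aux fhat f ε hε hclose' x x'⟩
  refine ⟨hmain, ?_⟩
  set C : Set (X × X) := {p | p.1 = p.2} with hC
  have hcorr : IsCorrespondence C := ⟨fun a => ⟨a, rfl⟩, fun b => ⟨b, rfl⟩⟩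
  have hdist : corrDistortion (dFilter f) (dFilter fhat) C ≤ ENNReal.ofReal (2 * ε) := by
    apply iSup₂_le; intro p hp; apply iSup₂_le; intro q hq
    rcases p with ⟨p1, p2⟩; rcases q with ⟨q1, q2⟩
    simp only [hC, Set.mem_setOf_eq] at hp hq
    subst hp; subst hq
    apply max_le
    · exact tsub_le_iff_left.mpr (hmain p1 q1).1
    · exact tsub_le_iff_left.mpr (hmain p1 q1).2
  calc ghDist (dFilter f) (dFilter fhat)
      ≤ corrDistortion (dFilter f) (dFilter fhat) C / 2 := by
        apply ENNReal.div_le_div_right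
        exact iInf_le (fun C : {C : Set (X × X) // IsCorrespondence C} =>
          corrDistortion (dFilter f) (dFilter fhat) C.1) ⟨C, hcorr⟩
    _ ≤ ENNReal.ofReal (2 * ε) / 2 := ENNReal.div_le_div_right hdist _
    _ ≤ ENNReal.ofReal (2 * ε) := ENNReal.half_le_self
end

section
/- Let Q be a probability measure on ℝ^p whose support satisfies Q(B(z,r)) ≥ min{1, a' r^β} for all z in the support and r > 0 (i.e., Q is (a',β)-standard). Let t = (t₁,…,t_k) ∈ (ℝ^p)^k, and let d_t(z) = min_j ‖z − t_j‖. Let Δ = sup{d_t(z) : z ∈ supp(Q)}. Then ∫ d_t² dQ ≥ (Δ²/4) · min{1, a' (Δ/2)^β}. -/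
open Set Metric MeasureTheory

/-- The distance-to-`k`-points function `d_t(z) = min_j ‖z − t_j‖`. -/
noncomputable def dTuple {E : Type*} [PseudoMetricSpace E] {k : ℕ} (t : Fin k → E)
    (z : E) : ℝ :=
  ⨅ j, dist z (t j)

lemma dTuple_nonneg' {E : Type*} [PseudoMetricSpace E] {k : ℕ} (hk : 0 < k)
    (t : Fin k → E) (z : E) : 0 ≤ dTuple t z := by
  haveI : Nonempty (Fin k) := ⟨⟨0, hk⟩⟩
  exact le_ciInf fun j => dist_nonneg

lemma dTuple_le_add' {E : Type*} [PseudoMetricSpace E] {k : ℕ} (hk : 0 < k)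
    (t : Fin k → E) (x y : E) :
    dTuple t x ≤ dTuple t y + dist x y := by
  haveI : Nonempty (Fin k) := ⟨⟨0, hk⟩⟩
  obtain ⟨j, hj⟩ := Finite.exists_min (fun j => dist y (t j))
  have h1 : dTuple t y = dist y (t j) :=
    le_antisymm (ciInf_le (Finite.bddBelow_range _) j) (le_ciInf hj)
  rw [h1]
  calc dTuple t x ≤ dist x (t j) := ciInf_le (Finite.bddBelow_range _) j
    _ ≤ dist x y + dist y (t j) := dist_triangle _ _ _
    _ = dist y (t j) + dist x y := by ring

lemma dTuple_continuous' {E : Type*} [PseudoMetricSpace E] {k : ℕ} (hk : 0 < k)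
    (t : Fin k → E) : Continuous (dTuple t) := by
  have : LipschitzWith 1 (dTuple t) := by
    apply LipschitzWith.of_dist_le_mul
    intro x y
    rw [Real.dist_eq]
    push_cast
    rw [one_mul, abs_le]
    constructor
    · linarith [dTuple_le_add' hk t y x, dist_comm x y]
    · linarith [dTuple_le_add' hk t x y]
  exact this.continuous


/-- If `Q` is `(a',β)`-standard on its support `S` and `Δ = sup_{z ∈ S} d_t(z)`, then
`∫ d_t² dQ ≥ (Δ²/4) · min{1, a' (Δ/2)^β}`. -/
theorem kmeans_cost_lower_bound {p k : ℕ} (hk : 0 < k)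
    (Q : Measure (EuclideanSpace ℝ (Fin p))) [IsProbabilityMeasure Q]
    (S : Set (EuclideanSpace ℝ (Fin p))) (hS : Q Sᶜ = 0)
    (a' β : ℝ) (ha : 0 < a') (hβ : 0 < β)
    (hstd : ∀ z ∈ S, ∀ r > (0 : ℝ),
      min 1 (a' * r ^ β) ≤ (Q (Metric.closedBall z r)).toReal)
    (t : Fin k → EuclideanSpace ℝ (Fin p))
    (Δ : ℝ) (hΔ : Δ = sSup {d | ∃ z ∈ S, d = dTuple t z}) :
    Δ ^ 2 / 4 * min 1 (a' * (Δ / 2) ^ β) ≤ ∫ z, (dTuple t z) ^ 2 ∂Q := by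
  set A : Set ℝ := {d | ∃ z ∈ S, d = dTuple t z} with hA
  set I : ℝ := ∫ z, (dTuple t z) ^ 2 ∂Q with hI
  have hI0 : 0 ≤ I := integral_nonneg fun z => sq_nonneg _
  -- Δ ≥ 0
  have hΔ0 : 0 ≤ Δ := by
    rcases A.eq_empty_or_nonempty with h | h
    · rw [hΔ, h, Real.sSup_empty]
    · by_cases hb : BddAbove A
      · obtain ⟨d, z, hz, hd⟩ := h
        have : 0 ≤ d := hd ▸ dTuple_nonneg' hk t z
        exact le_trans this (hΔ ▸ le_csSup hb ⟨z, hz, hd⟩)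
      · rw [hΔ, Real.sSup_of_not_bddAbove hb]
  rcases eq_or_lt_of_le hΔ0 with h0 | hΔpos
  · rw [← h0]; simpa using hI0
  -- Δ > 0. A is nonempty and bounded above.
  have hne : A.Nonempty := by
    by_contra h
    rw [Set.not_nonempty_iff_eq_empty] at h
    rw [hΔ, h, Real.sSup_empty] at hΔpos; exact lt_irrefl _ hΔpos
  have hbdd : BddAbove A := by
    by_contra h
    rw [hΔ, Real.sSup_of_not_bddAbove h] at hΔpos; exact lt_irrefl _ hΔpos
  have hleΔ : ∀ z ∈ S, dTuple t z ≤ Δ := fun z hz => hΔ ▸ le_csSup hbdd ⟨z, hz, rfl⟩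
  set m : ℝ := min 1 (a' * (Δ / 2) ^ β) with hm
  have hmpos : 0 < m :=
    lt_min one_pos (mul_pos ha (Real.rpow_pos_of_pos (half_pos hΔpos) β))
  -- integrability
  have hcont : Continuous fun z => (dTuple t z) ^ 2 := (dTuple_continuous' hk t).pow 2
  have haeS : ∀ᵐ z ∂Q, z ∈ S := by
    rw [MeasureTheory.ae_iff]
    exact hS
  have hint : Integrable (fun z => (dTuple t z) ^ 2) Q := by
    apply Integrable.mono' (integrable_const (Δ ^ 2)) hcont.aestronglyMeasurable
    filter_upwards [haeS] with z hz
    rw [Real.norm_eq_abs, abs_of_nonneg (sq_nonneg _)]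
    exact pow_le_pow_left₀ (dTuple_nonneg' hk t z) (hleΔ z hz) 2
  -- key: for each z₀ ∈ S, dTuple t z₀ - Δ/2 ≤ sqrt (I / m)
  have key : ∀ z₀ ∈ S, dTuple t z₀ - Δ / 2 ≤ Real.sqrt (I / m) := by
    intro z₀ hz₀
    set c : ℝ := dTuple t z₀
    rcases le_or_gt (c - Δ / 2) 0 with h | h
    · exact le_trans h (Real.sqrt_nonneg _)
    set B := Metric.closedBall z₀ (Δ / 2)
    have hQB : m ≤ (Q B).toReal := hstd z₀ hz₀ (Δ / 2) (half_pos hΔpos)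
    have hlow : ∀ z ∈ B, (c - Δ / 2) ^ 2 ≤ (dTuple t z) ^ 2 := by
      intro z hz
      apply pow_le_pow_left₀ h.le
      have := dTuple_le_add' hk t z₀ z
      have hd : dist z₀ z ≤ Δ / 2 := by
        rw [dist_comm]; exact mem_closedBall.mp hz
      linarith
    have h1 : (c - Δ / 2) ^ 2 * m ≤ (c - Δ / 2) ^ 2 * (Q B).toReal :=
      mul_le_mul_of_nonneg_left hQB (sq_nonneg _)
    have h2 : (c - Δ / 2) ^ 2 * (Q B).toReal ≤ ∫ z in B, (dTuple t z) ^ 2 ∂Q :=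
      by have := setIntegral_ge_of_const_le measurableSet_closedBall (measure_ne_top Q B)
           hlow hint.integrableOn
         rw [smul_eq_mul, mul_comm] at this; exact this
    have h3 : (∫ z in B, (dTuple t z) ^ 2 ∂Q) ≤ I :=
      setIntegral_le_integral hint (Filter.Eventually.of_forall fun z => sq_nonneg _)
    have h4 : (c - Δ / 2) ^ 2 ≤ I / m := by
      rw [le_div_iff₀ hmpos]; linarith
    exact (Real.le_sqrt h.le (div_nonneg hI0 hmpos.le)).mpr h4
  -- conclude
  have hsup : Δ ≤ Δ / 2 + Real.sqrt (I / m) := by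
    rw [hΔ]
    apply csSup_le hne
    rintro d ⟨z, hz, rfl⟩
    linarith [key z hz]
  have h5 : Δ / 2 ≤ Real.sqrt (I / m) := by linarith
  have h6 : (Δ / 2) ^ 2 ≤ I / m := (Real.le_sqrt (half_pos hΔpos).le (div_nonneg hI0 hmpos.le)).mp h5
  have : (Δ / 2) ^ 2 * m ≤ I := by
    rw [← le_div_iff₀ hmpos]; exact h6
  calc Δ ^ 2 / 4 * m = (Δ / 2) ^ 2 * m := by ring
    _ ≤ I := this
end

section
/- Let X_n be a finite subset of a geodesic metric space X with Hausdorff distance d_H(X_n, X) ≤ h (in the geodesic metric), and suppose γ : [0,1] → X is a continuous path. For each t, pick x_t ∈ X_n with d_g(γ(t), x_t) ≤ h. Then any two points x_{t_i}, x_{t_{i+1}} chosen at consecutive 'switch' parameters of the (finitely-valued) map t ↦ x_t satisfy d_g(x_{t_i}, x_{t_{i+1}}) ≤ 6h. In particular, the points of X_n visited along γ form a path in the 6h-neighborhood graph on X_n. -/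
open Set Metric

/-- Let `X_n` be a finite `h`-dense subset of a geodesic metric space, `γ` a continuous
path, and `p, q ∈ X_n` the sample points assigned at two consecutive switch parameters
`t ≤ t'` (so every point of `γ` on `[t, t']` is within `h` of `p` or of `q`, with
`γ t` within `h` of `p` and `γ t'` within `h` of `q`). Then `d(p, q) ≤ 6h`, i.e. `p` and
`q` are joined in the `6h`-neighborhood graph on `X_n`. -/
theorem consecutive_sample_points_close {X : Type*} [MetricSpace X]
    (h : ℝ) (h0 : 0 ≤ h)
    (Xn : Set X) (hXnfin : Xn.Finite)
    (hdense : ∀ x : X, ∃ p ∈ Xn, dist x p ≤ h)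
    (γ : ℝ → X) (t t' : ℝ) (ht : t ≤ t')
    (hγ : ContinuousOn γ (Set.Icc t t'))
    (p q : X) (hpXn : p ∈ Xn) (hqXn : q ∈ Xn)
    (hswitch : ∀ s ∈ Set.Icc t t', dist (γ s) p ≤ h ∨ dist (γ s) q ≤ h)
    (hp : dist (γ t) p ≤ h) (hq : dist (γ t') q ≤ h) :
    dist p q ≤ 6 * h := by
  have hIcc : IsPreconnected (Set.Icc t t') := isPreconnected_Icc
  set A : Set ℝ := Set.Icc t t' ∩ γ ⁻¹' (closedBall p h) with hA
  set B : Set ℝ := Set.Icc t t' ∩ γ ⁻¹' (closedBall q h) with hB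
  have hAc : IsClosed A := hγ.preimage_isClosed_of_isClosed isClosed_Icc
    Metric.isClosed_closedBall
  have hBc : IsClosed B := hγ.preimage_isClosed_of_isClosed isClosed_Icc
    Metric.isClosed_closedBall
  have hcover : Set.Icc t t' ⊆ A ∪ B := by
    intro s hs
    rcases hswitch s hs with h1 | h1
    · exact Or.inl ⟨hs, by simpa [mem_closedBall] using h1⟩
    · exact Or.inr ⟨hs, by simpa [mem_closedBall] using h1⟩
  have hAn : (Set.Icc t t' ∩ A).Nonempty :=
    ⟨t, ⟨⟨le_refl t, ht⟩, ⟨⟨le_refl t, ht⟩, by simpa [mem_closedBall] using hp⟩⟩⟩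
  have hBn : (Set.Icc t t' ∩ B).Nonempty :=
    ⟨t', ⟨⟨ht, le_refl t'⟩, ⟨⟨ht, le_refl t'⟩, by simpa [mem_closedBall] using hq⟩⟩⟩
  obtain ⟨s, hs⟩ := (isPreconnected_closed_iff.mp hIcc) A B hAc hBc hcover hAn hBn
  have h1 : dist (γ s) p ≤ h := by simpa [mem_closedBall] using hs.2.1.2
  have h2 : dist (γ s) q ≤ h := by simpa [mem_closedBall] using hs.2.2.2
  calc dist p q ≤ dist p (γ s) + dist (γ s) q := dist_triangle _ _ _
    _ ≤ h + h := add_le_add (by rwa [dist_comm]) h2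
    _ ≤ 6 * h := by linarith
end
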